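/- arXiv:1207.3684 — 2 statements merged into one kernel-verified Lean document; each statement's English description precedes it below -/
import Mathlib

section
/- Let R be a commutative ring with 1 and let M be a free R-module of rank 2 with basis {x, y}. The endomorphism σ_{(23)} + σ_{(234)} of M^{⊗4} (where σ denotes the permutation action on tensor factors) induces a well-defined R-linear map τ : Sym²(Sym²M) → Sym²(⋀²M), and the composite τ ∘ i equals multiplication by 3 on Sym²(⋀²M), where i : Sym²(⋀²M) → Sym²(Sym²M) is the canonical inclusion determined by i((x∧y)·(x∧y)) = (x·x)·(y·y) − (x·y)·(x·y). Explicitly, τ((x·x)·(y·y) − (x·y)·(x·y)) = 3·(x∧y)·(x∧y). -/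
open scoped TensorProduct

/-- The submodule of relations defining the symmetric power: differences of pure tensors
related by a permutation of the factors. -/
def symRel (R : Type*) [CommRing R] (n : ℕ) (M : Type*) [AddCommGroup M] [Module R M] :
    Submodule R (⨂[R]^n M) :=
  Submodule.span R {x | ∃ (σ : Equiv.Perm (Fin n)) (v : Fin n → M),
    x = PiTensorProduct.tprod R v - PiTensorProduct.tprod R (v ∘ σ)}

/-- The `n`-th symmetric power of the `R`-module `M`: the quotient of the `n`-fold tensor
power by the permutation action of the symmetric group. -/
def SymPow (R : Type*) [CommRing R] (n : ℕ) (M : Type*) [AddCommGroup M] [Module R M] :=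
  (⨂[R]^n M) ⧸ symRel R n M

noncomputable instance (R : Type*) [CommRing R] (n : ℕ) (M : Type*) [AddCommGroup M] [Module R M] :
    AddCommGroup (SymPow R n M) :=
  inferInstanceAs (AddCommGroup ((⨂[R]^n M) ⧸ symRel R n M))

noncomputable instance (R : Type*) [CommRing R] (n : ℕ) (M : Type*) [AddCommGroup M] [Module R M] :
    Module R (SymPow R n M) :=
  inferInstanceAs (Module R ((⨂[R]^n M) ⧸ symRel R n M))

/-- The canonical quotient map from the tensor power to the symmetric power. -/
noncomputable def SymPow.mk (R : Type*) [CommRing R] (n : ℕ) (M : Type*) [AddCommGroup M] [Module R M] :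
    (⨂[R]^n M) →ₗ[R] SymPow R n M :=
  (symRel R n M).mkQ

/-- The product `v 0 · v 1 · ⋯ · v (n-1)` in the symmetric power `SymPow R n M`. -/
noncomputable def SymPow.prod (R : Type*) [CommRing R] {n : ℕ} {M : Type*} [AddCommGroup M] [Module R M]
    (v : Fin n → M) : SymPow R n M :=
  SymPow.mk R n M (PiTensorProduct.tprod R v)

/-- The wedge `v 0 ∧ v 1 ∧ ⋯ ∧ v (n-1)`, as an element of the `n`-th exterior power
`⋀[R]^n M`. -/
noncomputable def wedgeMk (R : Type*) [CommRing R] {n : ℕ} {M : Type*} [AddCommGroup M] [Module R M]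
    (v : Fin n → M) : ⋀[R]^n M :=
  ⟨ExteriorAlgebra.ιMulti R n v, ExteriorAlgebra.ιMulti_range R n (Set.mem_range_self v)⟩

section helpers
variable {R : Type*} [CommRing R] {N T : Type*} [AddCommGroup N] [Module R N]
  [AddCommGroup T] [Module R T]

lemma upd0 {inst : DecidableEq (Fin 2)} (v : Fin 2 → N) (x : N) :
    @Function.update (Fin 2) (fun _ => N) inst v 0 x = ![x, v 1] := by
  rw [Subsingleton.elim inst (instDecidableEqFin 2)]
  funext i; fin_cases i <;> simp [Function.update]

lemma upd1 {inst : DecidableEq (Fin 2)} (v : Fin 2 → N) (x : N) :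
    @Function.update (Fin 2) (fun _ => N) inst v 1 x = ![v 0, x] := by
  rw [Subsingleton.elim inst (instDecidableEqFin 2)]
  funext i; fin_cases i <;> simp [Function.update]

lemma vec_eta (v : Fin 2 → N) : v = ![v 0, v 1] := by
  funext i; fin_cases i <;> simp

noncomputable def toBilin (m : MultilinearMap R (fun _ : Fin 2 => N) T) :
    N →ₗ[R] N →ₗ[R] T :=
  LinearMap.mk₂ R (fun a b => m ![a, b])
    (fun a a' b => by
      have h := m.map_update_add ![a, b] 0 a a'
      simpa [upd0] using h)
    (fun r a b => by
      have h := m.map_update_smul ![a, b] 0 r a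
      simpa [upd0] using h)
    (fun a b b' => by
      have h := m.map_update_add ![a, b] 1 b b'
      simpa [upd1] using h)
    (fun r a b => by
      have h := m.map_update_smul ![a, b] 1 r b
      simpa [upd1] using h)

@[simp] lemma toBilin_apply (m : MultilinearMap R (fun _ : Fin 2 => N) T) (a b : N) :
    toBilin m a b = m ![a, b] := rfl

noncomputable def ofBilin (f : N →ₗ[R] N →ₗ[R] T) :
    MultilinearMap R (fun _ : Fin 2 => N) T where
  toFun v := f (v 0) (v 1)
  map_update_add' v i x y := by
    fin_cases i <;> simp [upd0, upd1, map_add, LinearMap.add_apply]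
  map_update_smul' v i r x := by
    fin_cases i <;> simp [upd0, upd1, map_smul, LinearMap.smul_apply]

@[simp] lemma ofBilin_apply (f : N →ₗ[R] N →ₗ[R] T) (v : Fin 2 → N) :
    ofBilin f v = f (v 0) (v 1) := rfl

lemma fin2_perm (σ : Equiv.Perm (Fin 2)) (v : Fin 2 → N) :
    v ∘ σ = v ∨ v ∘ σ = ![v 1, v 0] := by
  have h2 : ∀ x : Fin 2, x = 0 ∨ x = 1 := by decide
  rcases h2 (σ 0) with h0 | h0
  · left
    have h1 : σ 1 = 1 := by
      rcases h2 (σ 1) with h1 | h1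
      · exact absurd (σ.injective (h1.trans h0.symm)) (by decide)
      · exact h1
    funext i; rcases h2 i with rfl | rfl <;> simp [h0, h1]
  · right
    have h1 : σ 1 = 0 := by
      rcases h2 (σ 1) with h1 | h1
      · exact h1
      · exact absurd (σ.injective (h1.trans h0.symm)) (by decide)
    funext i; rcases h2 i with rfl | rfl <;> simp [h0, h1]

lemma symRel_le_ker (m : MultilinearMap R (fun _ : Fin 2 => N) T)
    (hm : ∀ a b : N, m ![a, b] = m ![b, a]) :
    symRel R 2 N ≤ LinearMap.ker (PiTensorProduct.lift m) := by
  rw [symRel, Submodule.span_le]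
  rintro _ ⟨σ, v, rfl⟩
  simp only [SetLike.mem_coe, LinearMap.mem_ker, map_sub, PiTensorProduct.lift.tprod,
    sub_eq_zero]
  rcases fin2_perm σ v with h | h
  · rw [h]
  · rw [h, vec_eta v]; exact hm _ _

noncomputable def liftSym2 (m : MultilinearMap R (fun _ : Fin 2 => N) T)
    (hm : ∀ a b : N, m ![a, b] = m ![b, a]) : SymPow R 2 N →ₗ[R] T :=
  (symRel R 2 N).liftQ (PiTensorProduct.lift m) (symRel_le_ker m hm)

@[simp] lemma liftSym2_prod (m : MultilinearMap R (fun _ : Fin 2 => N) T)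
    (hm : ∀ a b : N, m ![a, b] = m ![b, a]) (v : Fin 2 → N) :
    liftSym2 m hm (SymPow.prod R v) = m v := by
  show (symRel R 2 N).liftQ (PiTensorProduct.lift m) (symRel_le_ker m hm)
      (Submodule.Quotient.mk (PiTensorProduct.tprod R v)) = m v
  rw [Submodule.liftQ_apply, PiTensorProduct.lift.tprod]

lemma SymPow.hom_ext {f g : SymPow R 2 N →ₗ[R] T}
    (h : ∀ v : Fin 2 → N, f (SymPow.prod R v) = g (SymPow.prod R v)) : f = g := by
  have h2 : f ∘ₗ SymPow.mk R 2 N = g ∘ₗ SymPow.mk R 2 N := by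
    apply PiTensorProduct.ext
    ext v
    simpa [SymPow.prod] using h v
  ext x
  obtain ⟨y, rfl⟩ := (symRel R 2 N).mkQ_surjective x
  exact LinearMap.congr_fun h2 y

noncomputable def symBil : N →ₗ[R] N →ₗ[R] SymPow R 2 N :=
  toBilin ((SymPow.mk R 2 N).compMultilinearMap (PiTensorProduct.tprod R))

@[simp] lemma symBil_apply (a b : N) : symBil a b = SymPow.prod R ![a, b] := rfl

lemma symBil_comm (a b : N) : (symBil a b : SymPow R 2 N) = symBil b a := by
  simp only [symBil_apply, SymPow.prod, SymPow.mk]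
  refine (Submodule.Quotient.eq _).2 (Submodule.subset_span ⟨Equiv.swap 0 1, ![a, b], ?_⟩)
  have h : (![a, b] : Fin 2 → N) ∘ ⇑(Equiv.swap (0 : Fin 2) 1) = ![b, a] := by
    funext i; fin_cases i <;> simp [Equiv.swap_apply_def]
  rw [h]

end helpers

section wedge
variable {R : Type*} [CommRing R] {M : Type*} [AddCommGroup M] [Module R M]

noncomputable def Wm : MultilinearMap R (fun _ : Fin 2 => M) (⋀[R]^2 M) where
  toFun := wedgeMk R
  map_update_add' v i x y := Subtype.ext <| by
    simpa [wedgeMk] using (ExteriorAlgebra.ιMulti R 2).map_update_add v i x y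
  map_update_smul' v i r x := Subtype.ext <| by
    simpa [wedgeMk] using (ExteriorAlgebra.ιMulti R 2).map_update_smul v i r x

noncomputable def Wb : M →ₗ[R] M →ₗ[R] (⋀[R]^2 M : Submodule R (ExteriorAlgebra R M)) :=
  toBilin Wm

@[simp] lemma Wb_apply (a b : M) : Wb a b = wedgeMk R ![a, b] := rfl

lemma Wb_coe (a b : M) :
    ((Wb a b : ⋀[R]^2 M) : ExteriorAlgebra R M) = ExteriorAlgebra.ιMulti R 2 ![a, b] := rfl

lemma Wb_self (a : M) : (Wb a a : ⋀[R]^2 M) = 0 := Subtype.ext <| by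
  show ExteriorAlgebra.ιMulti R 2 ![a, a] = ((0 : ⋀[R]^2 M) : ExteriorAlgebra R M)
  rw [ZeroMemClass.coe_zero]
  exact (ExteriorAlgebra.ιMulti R 2).map_eq_zero_of_eq ![a, a] (i := 0) (j := 1) rfl (by decide)

lemma Wb_comm (a b : M) : (Wb a b : ⋀[R]^2 M) = - Wb b a := Subtype.ext <| by
  have h : (![b, a] : Fin 2 → M) ∘ ⇑(Equiv.swap (0 : Fin 2) 1) = ![a, b] := by
    funext i; fin_cases i <;> simp [Equiv.swap_apply_def]
  have h2 := (ExteriorAlgebra.ιMulti R 2).map_swap (v := ![b, a]) (i := 0) (j := 1) (by decide)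
  rw [h] at h2
  show ExteriorAlgebra.ιMulti R 2 ![a, b] = ((-(Wb b a) : ⋀[R]^2 M) : ExteriorAlgebra R M)
  rw [NegMemClass.coe_neg]
  exact h2

end wedge

section tower
variable (R : Type*) [CommRing R] (M : Type*) [AddCommGroup M] [Module R M]

/-- the inner quadrilinear expression, as a bilinear map in the last two slots -/
noncomputable def Gb (a b : M) :
    M →ₗ[R] M →ₗ[R] SymPow R 2 (⋀[R]^2 M : Submodule R (ExteriorAlgebra R M)) :=
  LinearMap.mk₂ R (fun c d => symBil (Wb a c) (Wb b d) + symBil (Wb a d) (Wb b c))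
    (fun c c' d => by simp only [map_add, LinearMap.add_apply]; abel)
    (fun r c d => by simp only [map_smul, LinearMap.smul_apply, smul_add])
    (fun c d d' => by simp only [map_add, LinearMap.add_apply]; abel)
    (fun r c d => by simp only [map_smul, LinearMap.smul_apply, smul_add])

@[simp] lemma Gb_apply (a b c d : M) :
    Gb R M a b c d = symBil (Wb a c) (Wb b d) + symBil (Wb a d) (Wb b c) := rfl

noncomputable def m₁ :
    MultilinearMap R (fun _ : Fin 2 => M)
      (M →ₗ[R] M →ₗ[R] SymPow R 2 (⋀[R]^2 M : Submodule R (ExteriorAlgebra R M))) where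
  toFun v := Gb R M (v 0) (v 1)
  map_update_add' v i x y := by
    fin_cases i <;>
    · refine LinearMap.ext fun c => LinearMap.ext fun d => ?_
      simp only [Fin.zero_eta, Fin.mk_one, Fin.isValue, upd0, upd1, Matrix.cons_val_zero,
        Matrix.cons_val_one, Matrix.head_cons, Gb_apply, LinearMap.add_apply, map_add]
      abel
  map_update_smul' v i r x := by
    fin_cases i <;>
    · refine LinearMap.ext fun c => LinearMap.ext fun d => ?_
      simp only [Fin.zero_eta, Fin.mk_one, Fin.isValue, upd0, upd1, Matrix.cons_val_zero,
        Matrix.cons_val_one, Matrix.head_cons, Gb_apply, LinearMap.smul_apply, map_smul, smul_add]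

@[simp] lemma m₁_apply (v : Fin 2 → M) : m₁ R M v = Gb R M (v 0) (v 1) := rfl

lemma hm₁ : ∀ a b : M, m₁ R M ![a, b] = m₁ R M ![b, a] := by
  intro a b
  refine LinearMap.ext fun c => LinearMap.ext fun d => ?_
  simp only [m₁_apply, Matrix.cons_val_zero, Matrix.cons_val_one, Matrix.head_cons, Gb_apply]
  rw [symBil_comm (Wb a c) (Wb b d), symBil_comm (Wb a d) (Wb b c), add_comm]

noncomputable def E₁ := liftSym2 (m₁ R M) (hm₁ R M)

noncomputable def K : M →ₗ[R] M →ₗ[R]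
    (SymPow R 2 M →ₗ[R] SymPow R 2 (⋀[R]^2 M : Submodule R (ExteriorAlgebra R M))) :=
  LinearMap.lflip.toLinearMap ∘ₗ (E₁ R M).flip

@[simp] lemma K_apply (c d : M) (s : SymPow R 2 M) : K R M c d s = E₁ R M s c d := rfl

noncomputable def m₂ : MultilinearMap R (fun _ : Fin 2 => M)
    (SymPow R 2 M →ₗ[R] SymPow R 2 (⋀[R]^2 M : Submodule R (ExteriorAlgebra R M))) :=
  ofBilin (K R M)

lemma hm₂ : ∀ c d : M, m₂ R M ![c, d] = m₂ R M ![d, c] := by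
  intro c d
  refine SymPow.hom_ext fun v => ?_
  simp only [m₂, ofBilin_apply, Matrix.cons_val_zero, Matrix.cons_val_one, Matrix.head_cons,
    K_apply, E₁, liftSym2_prod, m₁_apply, Gb_apply]
  exact add_comm _ _

noncomputable def E₂ := liftSym2 (m₂ R M) (hm₂ R M)

lemma E₂_prod_prod (v w : Fin 2 → M) :
    E₂ R M (SymPow.prod R v) (SymPow.prod R w) =
      symBil (Wb (w 0) (v 0)) (Wb (w 1) (v 1)) + symBil (Wb (w 0) (v 1)) (Wb (w 1) (v 0)) := by
  simp only [E₂, liftSym2_prod, m₂, ofBilin_apply, K_apply, E₁, liftSym2_prod, m₁_apply, Gb_apply]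

lemma symBil_neg_neg {N : Type*} [AddCommGroup N] [Module R N] (x y : N) :
    symBil (R := R) (-x) (-y) = symBil x y := by
  simp only [map_neg, LinearMap.neg_apply, neg_neg]

lemma E₂_symm : E₂ R M = (E₂ R M).flip := by
  refine SymPow.hom_ext fun v => ?_
  refine SymPow.hom_ext fun w => ?_
  rw [LinearMap.flip_apply, E₂_prod_prod, E₂_prod_prod]
  rw [Wb_comm (v 0) (w 0), Wb_comm (v 1) (w 1), symBil_neg_neg,
    Wb_comm (v 0) (w 1), Wb_comm (v 1) (w 0), symBil_neg_neg]
  congr 1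
  exact symBil_comm _ _

noncomputable def m₃ : MultilinearMap R (fun _ : Fin 2 => SymPow R 2 M)
    (SymPow R 2 (⋀[R]^2 M : Submodule R (ExteriorAlgebra R M))) :=
  ofBilin (E₂ R M)

lemma hm₃ : ∀ s t : SymPow R 2 M, m₃ R M ![s, t] = m₃ R M ![t, s] := by
  intro s t
  simp only [m₃, ofBilin_apply, Matrix.cons_val_zero, Matrix.cons_val_one, Matrix.head_cons]
  conv_lhs => rw [E₂_symm]
  rfl

noncomputable def tau : SymPow R 2 (SymPow R 2 M) →ₗ[R]
    SymPow R 2 (⋀[R]^2 M : Submodule R (ExteriorAlgebra R M)) :=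
  liftSym2 (m₃ R M) (hm₃ R M)

lemma tau_prod (v : Fin 4 → M) :
    tau R M (SymPow.prod R ![SymPow.prod R ![v 0, v 1], SymPow.prod R ![v 2, v 3]]) =
      SymPow.prod R ![wedgeMk R ![v 0, v 2], wedgeMk R ![v 1, v 3]]
      + SymPow.prod R ![wedgeMk R ![v 0, v 3], wedgeMk R ![v 1, v 2]] := by
  rw [tau, liftSym2_prod]
  simp only [m₃, ofBilin_apply, Matrix.cons_val_zero, Matrix.cons_val_one, Matrix.head_cons]
  rw [E₂_prod_prod]
  simp only [Matrix.cons_val_zero, Matrix.cons_val_one, Matrix.head_cons]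
  rw [Wb_comm (v 2) (v 0), Wb_comm (v 3) (v 1), symBil_neg_neg,
    Wb_comm (v 2) (v 1), Wb_comm (v 3) (v 0), symBil_neg_neg]
  rw [symBil_comm (Wb (v 1) (v 2)) (Wb (v 0) (v 3))]
  simp only [Wb_apply, symBil_apply]

end tower

section final
variable {R M : Type*} [CommRing R] [AddCommGroup M] [Module R M] (b : Module.Basis (Fin 2) R M)

lemma exists_smul_wedge (x : (⋀[R]^2 M : Submodule R (ExteriorAlgebra R M))) :
    ∃ r : R, x = r • wedgeMk R ![b 0, b 1] := by
  obtain ⟨xv, hx⟩ := x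
  have hx' : xv ∈ Submodule.span R (Set.range (ExteriorAlgebra.ιMulti R 2 (M := M))) := by
    rw [ExteriorAlgebra.ιMulti_span_fixedDegree]; exact hx
  suffices h : ∃ r : R, xv = r • (ExteriorAlgebra.ιMulti R 2 ![b 0, b 1]) by
    obtain ⟨r, hr⟩ := h
    exact ⟨r, Subtype.ext (by simpa [wedgeMk] using hr)⟩
  refine Submodule.span_induction ?_ ⟨0, by simp⟩ ?_ ?_ hx'
  · rintro y ⟨u, rfl⟩
    have hA00 : ExteriorAlgebra.ιMulti R 2 (M := M) ![b 0, b 0] = 0 :=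
      (ExteriorAlgebra.ιMulti R 2).map_eq_zero_of_eq ![b 0, b 0] (i := 0) (j := 1) rfl (by decide)
    have hA11 : ExteriorAlgebra.ιMulti R 2 (M := M) ![b 1, b 1] = 0 :=
      (ExteriorAlgebra.ιMulti R 2).map_eq_zero_of_eq ![b 1, b 1] (i := 0) (j := 1) rfl (by decide)
    have hA10 : ExteriorAlgebra.ιMulti R 2 (M := M) ![b 1, b 0]
        = - ExteriorAlgebra.ιMulti R 2 ![b 0, b 1] := by
      have h : (![b 0, b 1] : Fin 2 → M) ∘ ⇑(Equiv.swap (0 : Fin 2) 1) = ![b 1, b 0] := by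
        funext i; fin_cases i <;> simp [Equiv.swap_apply_def]
      have h2 := (ExteriorAlgebra.ιMulti R 2).map_swap (v := ![b 0, b 1]) (i := 0) (j := 1)
        (by decide)
      rw [h] at h2; exact h2
    set Ab := toBilin (ExteriorAlgebra.ιMulti R 2 (M := M)).toMultilinearMap with hAb
    have hu : ExteriorAlgebra.ιMulti R 2 u = Ab (u 0) (u 1) := by
      conv_lhs => rw [vec_eta u]
      rfl
    set r00 := b.repr (u 0) 0; set r01 := b.repr (u 0) 1
    set r10 := b.repr (u 1) 0; set r11 := b.repr (u 1) 1
    have h0 : u 0 = r00 • b 0 + r01 • b 1 := by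
      have := b.sum_repr (u 0); rw [Fin.sum_univ_two] at this; exact this.symm
    have h1 : u 1 = r10 • b 0 + r11 • b 1 := by
      have := b.sum_repr (u 1); rw [Fin.sum_univ_two] at this; exact this.symm
    refine ⟨r00 * r11 - r01 * r10, ?_⟩
    rw [hu, h0, h1]
    simp only [map_add, map_smul, LinearMap.add_apply, LinearMap.smul_apply]
    have e00 : Ab (b 0) (b 0) = 0 := hA00
    have e11 : Ab (b 1) (b 1) = 0 := hA11
    have e10 : Ab (b 1) (b 0) = - Ab (b 0) (b 1) := hA10
    have etgt : ExteriorAlgebra.ιMulti R 2 (M := M) ![b 0, b 1] = Ab (b 0) (b 1) := rfl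
    rw [e00, e11, e10, etgt]
    module
  · rintro x y hx hy ⟨r, rfl⟩ ⟨r', rfl⟩
    exact ⟨r + r', by rw [add_smul]⟩
  · rintro c x hx ⟨r, rfl⟩
    exact ⟨c * r, by rw [smul_smul]⟩

lemma span_gen {N : Type*} [AddCommGroup N] [Module R N] (z : N)
    (hz : ∀ w : N, ∃ r : R, w = r • z) :
    Submodule.span R {SymPow.prod R ![z, z]} = (⊤ : Submodule R (SymPow R 2 N)) := by
  rw [eq_top_iff]
  rintro x -
  obtain ⟨y, rfl⟩ := (symRel R 2 N).mkQ_surjective x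
  have hy : y ∈ Submodule.span R (Set.range (PiTensorProduct.tprod R)) := by
    rw [PiTensorProduct.span_tprod_eq_top]; exact Submodule.mem_top
  refine Submodule.span_induction
    (p := fun y _ => (symRel R 2 N).mkQ y ∈
      Submodule.span R
        {SymPow.prod R ![z, z]}) ?_ ?_ ?_ ?_ hy
  · rintro _ ⟨v, rfl⟩
    obtain ⟨r, hr⟩ := hz (v 0)
    obtain ⟨r', hr'⟩ := hz (v 1)
    have h1 : (symRel R 2 N).mkQ
        (PiTensorProduct.tprod R v) = symBil (v 0) (v 1) := by
      rw [symBil_apply]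
      show SymPow.prod R v = SymPow.prod R ![v 0, v 1]
      conv_lhs => rw [vec_eta v]
    rw [h1, hr, hr']
    simp only [map_smul, LinearMap.smul_apply, smul_smul]
    exact Submodule.smul_mem (Submodule.span R {SymPow.prod R ![z, z]}) _ (Submodule.subset_span rfl)
  · simp only [map_zero]; exact Submodule.zero_mem _
  · intro x y hx hy hx' hy'
    rw [map_add]; exact Submodule.add_mem _ hx' hy'
  · intro c x hx hx'
    rw [map_smul]; exact Submodule.smul_mem _ _ hx'

lemma span_zz :
    Submodule.span R
      {SymPow.prod R ![wedgeMk R ![b 0, b 1], wedgeMk R ![b 0, b 1]]} =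
      (⊤ : Submodule R (SymPow R 2 (⋀[R]^2 M : Submodule R (ExteriorAlgebra R M)))) :=
  span_gen _ (exists_smul_wedge b)

end final

theorem stmt15 {R M : Type*} [CommRing R] [AddCommGroup M] [Module R M]
    (b : Module.Basis (Fin 2) R M) :
    ∃ τ : SymPow R 2 (SymPow R 2 M) →ₗ[R] SymPow R 2 (⋀[R]^2 M),
      (∀ v : Fin 4 → M,
        τ (SymPow.prod R ![SymPow.prod R ![v 0, v 1], SymPow.prod R ![v 2, v 3]]) =
          SymPow.prod R ![wedgeMk R ![v 0, v 2], wedgeMk R ![v 1, v 3]]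
          + SymPow.prod R ![wedgeMk R ![v 0, v 3], wedgeMk R ![v 1, v 2]]) ∧
      (∀ i : SymPow R 2 (⋀[R]^2 M) →ₗ[R] SymPow R 2 (SymPow R 2 M),
        (i (SymPow.prod R ![wedgeMk R ![b 0, b 1], wedgeMk R ![b 0, b 1]]) =
          SymPow.prod R ![SymPow.prod R ![b 0, b 0], SymPow.prod R ![b 1, b 1]]
          - SymPow.prod R ![SymPow.prod R ![b 0, b 1], SymPow.prod R ![b 0, b 1]]) →
        τ ∘ₗ i = (3 : ℕ) • LinearMap.id) ∧
      τ (SymPow.prod R ![SymPow.prod R ![b 0, b 0], SymPow.prod R ![b 1, b 1]]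
          - SymPow.prod R ![SymPow.prod R ![b 0, b 1], SymPow.prod R ![b 0, b 1]]) =
        (3 : ℕ) • SymPow.prod R ![wedgeMk R ![b 0, b 1], wedgeMk R ![b 0, b 1]] := by
  have t1 := tau_prod R M ![b 0, b 0, b 1, b 1]
  have t2 := tau_prod R M ![b 0, b 1, b 0, b 1]
  simp only [Matrix.cons_val_zero, Matrix.cons_val_one, Matrix.head_cons, Matrix.cons_val_two,
    Matrix.tail_cons, Matrix.cons_val_three, Matrix.head_fin_const] at t1 t2
  have hw0 : wedgeMk R ![b 0, b 0] =
      (0 : (⋀[R]^2 M : Submodule R (ExteriorAlgebra R M))) := Wb_self (b 0)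
  have hw10 : wedgeMk R ![b 1, b 0] = - wedgeMk R ![b 0, b 1] := Wb_comm (b 1) (b 0)
  rw [hw0, hw10] at t2
  have hp0 : SymPow.prod R ![(0 : (⋀[R]^2 M : Submodule R (ExteriorAlgebra R M))),
      wedgeMk R ![b 1, b 1]] = 0 := by
    rw [← symBil_apply, map_zero, LinearMap.zero_apply]
  have hpn : SymPow.prod R ![wedgeMk R ![b 0, b 1], - wedgeMk R ![b 0, b 1]] =
      - SymPow.prod R ![wedgeMk R ![b 0, b 1], wedgeMk R ![b 0, b 1]] := by
    rw [← symBil_apply, map_neg, ← symBil_apply]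
  rw [hp0, hpn] at t2
  have h3 : tau R M
      (SymPow.prod R ![SymPow.prod R ![b 0, b 0], SymPow.prod R ![b 1, b 1]]
        - SymPow.prod R ![SymPow.prod R ![b 0, b 1], SymPow.prod R ![b 0, b 1]]) =
      (3 : ℕ) • SymPow.prod R ![wedgeMk R ![b 0, b 1], wedgeMk R ![b 0, b 1]] := by
    rw [map_sub, t1, t2, succ_nsmul, two_nsmul]
    abel
  refine ⟨tau R M, tau_prod R M, fun i hi => ?_, h3⟩
  refine LinearMap.ext_on (span_zz b) ?_
  intro x hx
  rw [Set.mem_singleton_iff] at hx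
  subst hx
  rw [LinearMap.comp_apply, hi, h3, LinearMap.smul_apply, LinearMap.id_apply]
end

section
/- Let R be a commutative ring with 1 and let M be an R-module. With α₁ : ⋀⁴M → Sym²(⋀²M) induced by id − σ_{(23)} + σ_{(234)}, α₃ : Sym²(Sym²M) → Sym⁴M induced by the identity of M^{⊗4}, β₃ : Sym⁴M → Sym²(Sym²M) induced by id + σ_{(23)} + σ_{(234)}, and β₁ : Sym²(⋀²M) → ⋀⁴M induced by the identity of M^{⊗4}, the composites satisfy β₁ ∘ α₁ = 3 · id_{⋀⁴M} and α₃ ∘ β₃ = 3 · id_{Sym⁴M}. -/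
open scoped TensorProduct

section Aux
variable {R M : Type*} [CommRing R] [AddCommGroup M] [Module R M]

lemma SymPow.prod_perm {n : ℕ} (σ : Equiv.Perm (Fin n)) (v : Fin n → M) :
    SymPow.prod R (v ∘ σ) = SymPow.prod R v := by
  have h : PiTensorProduct.tprod R v - PiTensorProduct.tprod R (v ∘ σ) ∈ symRel R n M :=
    Submodule.subset_span ⟨σ, v, rfl⟩
  unfold SymPow.prod SymPow.mk
  rw [eq_comm]
  exact (Submodule.Quotient.eq _).2 h

lemma wedgeMk_swap {n : ℕ} {i j : Fin n} (hij : i ≠ j) (v : Fin n → M) :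
    wedgeMk R (v ∘ Equiv.swap i j) = - wedgeMk R v :=
  Subtype.ext (by
    simpa [wedgeMk] using (ExteriorAlgebra.ιMulti R n (M := M)).map_swap v hij)

lemma wedgeMk_span :
    Submodule.span R (Set.range (fun v : Fin 4 → M => wedgeMk R v)) = ⊤ := by
  apply Submodule.map_injective_of_injective (f := (⋀[R]^4 M).subtype)
    (Submodule.injective_subtype _)
  rw [Submodule.map_span, Submodule.map_top, Submodule.range_subtype]
  have himg : (⋀[R]^4 M).subtype '' Set.range (fun v : Fin 4 → M => wedgeMk R v)
      = Set.range (ExteriorAlgebra.ιMulti R 4 (M := M)) := by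
    ext x
    constructor
    · rintro ⟨-, ⟨v, rfl⟩, rfl⟩; exact ⟨v, rfl⟩
    · rintro ⟨v, rfl⟩; exact ⟨wedgeMk R v, ⟨v, rfl⟩, rfl⟩
  rw [himg, ExteriorAlgebra.ιMulti_span_fixedDegree]

end Aux

theorem stmt18 {R M : Type*} [CommRing R] [AddCommGroup M] [Module R M]
    (α₁ : (⋀[R]^4 M) →ₗ[R] SymPow R 2 (⋀[R]^2 M))
    (hα₁ : ∀ v : Fin 4 → M,
      α₁ (wedgeMk R v) =
        SymPow.prod R ![wedgeMk R ![v 0, v 1], wedgeMk R ![v 2, v 3]]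
        - SymPow.prod R ![wedgeMk R ![v 0, v 2], wedgeMk R ![v 1, v 3]]
        + SymPow.prod R ![wedgeMk R ![v 0, v 3], wedgeMk R ![v 1, v 2]])
    (α₃ : SymPow R 2 (SymPow R 2 M) →ₗ[R] SymPow R 4 M)
    (hα₃ : ∀ v : Fin 4 → M,
      α₃ (SymPow.prod R ![SymPow.prod R ![v 0, v 1], SymPow.prod R ![v 2, v 3]]) =
        SymPow.prod R v)
    (β₃ : SymPow R 4 M →ₗ[R] SymPow R 2 (SymPow R 2 M))
    (hβ₃ : ∀ v : Fin 4 → M,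
      β₃ (SymPow.prod R v) =
        SymPow.prod R ![SymPow.prod R ![v 0, v 1], SymPow.prod R ![v 2, v 3]]
        + SymPow.prod R ![SymPow.prod R ![v 0, v 2], SymPow.prod R ![v 1, v 3]]
        + SymPow.prod R ![SymPow.prod R ![v 0, v 3], SymPow.prod R ![v 1, v 2]])
    (β₁ : SymPow R 2 (⋀[R]^2 M) →ₗ[R] (⋀[R]^4 M))
    (hβ₁ : ∀ v : Fin 4 → M,
      β₁ (SymPow.prod R ![wedgeMk R ![v 0, v 1], wedgeMk R ![v 2, v 3]]) =
        wedgeMk R v) :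
    β₁ ∘ₗ α₁ = (3 : ℕ) • LinearMap.id ∧ α₃ ∘ₗ β₃ = (3 : ℕ) • LinearMap.id := by
  constructor
  · apply LinearMap.ext_on (wedgeMk_span (R := R) (M := M))
    rintro - ⟨v, rfl⟩
    have e2 : ![v 0, v 2, v 1, v 3] = v ∘ Equiv.swap (1 : Fin 4) 2 := by
      ext i; fin_cases i <;> simp <;> rfl
    have e3 : ![v 0, v 3, v 1, v 2] = (v ∘ Equiv.swap (1 : Fin 4) 3) ∘ Equiv.swap (2 : Fin 4) 3 := by
      ext i; fin_cases i <;> simp <;> rfl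
    have h1 := hβ₁ v
    have h2 := hβ₁ ![v 0, v 2, v 1, v 3]
    have h3 := hβ₁ ![v 0, v 3, v 1, v 2]
    simp only [Matrix.cons_val_zero, Matrix.cons_val_one, Matrix.head_cons,
      Matrix.cons_val_two, Matrix.tail_cons, Matrix.cons_val_three] at h2 h3
    rw [e2, wedgeMk_swap (by decide)] at h2
    rw [e3, wedgeMk_swap (by decide), wedgeMk_swap (by decide), neg_neg] at h3
    simp only [LinearMap.comp_apply, hα₁ v, map_add, map_sub, h1, h2, h3,
      LinearMap.smul_apply, LinearMap.id_apply]
    module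
  · apply Submodule.linearMap_qext
    apply PiTensorProduct.ext
    ext v
    have e2 : ![v 0, v 2, v 1, v 3] = v ∘ Equiv.swap (1 : Fin 4) 2 := by
      ext i; fin_cases i <;> simp <;> rfl
    have e3 : ![v 0, v 3, v 1, v 2] = (v ∘ Equiv.swap (1 : Fin 4) 3) ∘ Equiv.swap (2 : Fin 4) 3 := by
      ext i; fin_cases i <;> simp <;> rfl
    have h1 := hα₃ v
    have h2 := hα₃ ![v 0, v 2, v 1, v 3]
    have h3 := hα₃ ![v 0, v 3, v 1, v 2]
    simp only [Matrix.cons_val_zero, Matrix.cons_val_one, Matrix.head_cons,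
      Matrix.cons_val_two, Matrix.tail_cons, Matrix.cons_val_three] at h2 h3
    rw [e2, SymPow.prod_perm] at h2
    rw [e3, SymPow.prod_perm, SymPow.prod_perm] at h3
    show (α₃ ∘ₗ β₃) (SymPow.prod R v) = ((3 : ℕ) • LinearMap.id) (SymPow.prod R v)
    simp only [LinearMap.comp_apply, hβ₃ v, map_add, h1, h2, h3,
      LinearMap.smul_apply, LinearMap.id_apply]
    module
end
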